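/- Let (X,d) be a complete metric space and let φ : X → [0,∞) be a locally bounded function. Let ε > 0 and τ > 1. Then for every a ∈ X with φ(a) > 0 there exists a point ã ∈ X such that: (i) d(a, ã) ≤ τ/(ε·φ(a)·(τ−1)); (ii) φ(ã) ≥ φ(a); and (iii) φ(x) ≤ τ·φ(ã) for every x ∈ X with d(x, ã) ≤ 1/(ε·φ(ã)). -/

import Mathlib

open Filter Topology

/-- **Berteloot–Duval type localization lemma.**
Let `(X, d)` be a complete metric space and `φ : X → [0,∞)` a locally bounded function
(every point has a neighborhood on which `φ` is bounded). Let `ε > 0` and `τ > 1`.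
Then for every `a ∈ X` with `φ a > 0` there is `b ∈ X` such that
(i) `d(a,b) ≤ τ/(ε·φ(a)·(τ-1))`, (ii) `φ b ≥ φ a`, and
(iii) `φ x ≤ τ·φ b` whenever `d(x,b) ≤ 1/(ε·φ b)`. -/
theorem stmt0 {X : Type*} [MetricSpace X] [CompleteSpace X]
    (φ : X → ℝ) (hφ_nonneg : ∀ x, 0 ≤ φ x)
    (hφ_locbdd : ∀ x : X, ∃ C : ℝ, ∀ᶠ y in 𝓝 x, φ y ≤ C)
    (ε τ : ℝ) (hε : 0 < ε) (hτ : 1 < τ)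
    (a : X) (ha : 0 < φ a) :
    ∃ b : X,
      dist a b ≤ τ / (ε * φ a * (τ - 1)) ∧
      φ a ≤ φ b ∧
      ∀ x : X, dist x b ≤ 1 / (ε * φ b) → φ x ≤ τ * φ b := by
  classical
  by_contra hcon
  push_neg at hcon
  set D : ℝ := τ / (ε * φ a * (τ - 1)) with hD
  have hτ0 : (0:ℝ) < τ := lt_trans one_pos hτ
  have hτ1 : (0:ℝ) < τ - 1 := by linarith
  have hD_pos : 0 < D := by
    apply div_pos hτ0; positivity
  -- hcon : ∀ b, dist a b ≤ D → φ a ≤ φ b → ∃ x, dist x b ≤ 1/(ε*φ b) ∧ τ * φ b < φ x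
  choose F hF1 hF2 using hcon
  set step : X → X := fun b =>
    if hb : dist a b ≤ D ∧ φ a ≤ φ b then F b hb.1 hb.2 else b with hstep
  set f : ℕ → X := fun n => step^[n] a with hf
  have hτinv_pos : (0:ℝ) < τ⁻¹ := inv_pos.mpr hτ0
  have hτinv_lt : τ⁻¹ < 1 := by
    rw [inv_lt_one_iff₀]; right; exact hτ
  have key : ∀ n, τ ^ n * φ a ≤ φ (f n) ∧
      dist a (f n) ≤ D * (1 - τ⁻¹ ^ n) ∧
      dist (f n) (f (n + 1)) ≤ (1 / (ε * φ a)) * τ⁻¹ ^ n := by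
    intro n
    induction n with
    | zero =>
      have h0 : f 0 = a := rfl
      -- first two trivial; need the step bound too, do them jointly below
      -- handle via the generic step argument:
      refine ⟨by simp [h0], by simp [h0], ?_⟩
      · -- dist a (f 1)
        have hcond : dist a (f 0) ≤ D ∧ φ a ≤ φ (f 0) := by
          constructor
          · simp [h0, hD_pos.le]
          · simp [h0]
        have hfs : f 1 = F (f 0) hcond.1 hcond.2 := by
          show step^[1] a = _
          rw [Function.iterate_one]
          show step (f 0) = _
          rw [hstep]
          simp only [dif_pos hcond]
        rw [hfs, dist_comm]
        have := hF1 (f 0) hcond.1 hcond.2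
        calc dist (F (f 0) hcond.1 hcond.2) (f 0) ≤ 1 / (ε * φ (f 0)) := this
          _ ≤ (1 / (ε * φ a)) * τ⁻¹ ^ 0 := by
              simp [h0]
    | succ n ih =>
      obtain ⟨ih1, ih2, ih3⟩ := ih
      have hpow_pos : (0:ℝ) < τ ^ n := pow_pos hτ0 n
      have hpow1 : (1:ℝ) ≤ τ ^ n := one_le_pow₀ hτ.le
      have hφn_pos : 0 < φ (f n) := lt_of_lt_of_le (by nlinarith) ih1
      have hphi : φ a ≤ φ (f n) := le_trans (by nlinarith) ih1
      have hτinvpow : (0:ℝ) < τ⁻¹ ^ n := pow_pos hτinv_pos n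
      have hdn : dist a (f n) ≤ D := by nlinarith
      have hcond : dist a (f n) ≤ D ∧ φ a ≤ φ (f n) := ⟨hdn, hphi⟩
      have hfs : f (n + 1) = F (f n) hcond.1 hcond.2 := by
        show step^[n+1] a = _
        rw [Function.iterate_succ_apply']
        show step (f n) = _
        rw [hstep]
        simp only [dif_pos hcond]
      have hgrow : τ ^ (n + 1) * φ a ≤ φ (f (n + 1)) := by
        have h2 := hF2 (f n) hcond.1 hcond.2
        rw [hfs]
        have : τ ^ (n + 1) * φ a = τ * (τ ^ n * φ a) := by ring
        rw [this]
        nlinarith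
      have hstepdist : dist (f n) (f (n + 1)) ≤ (1 / (ε * φ a)) * τ⁻¹ ^ n := ih3
      have hdist1 : dist a (f (n + 1)) ≤ D * (1 - τ⁻¹ ^ (n + 1)) := by
        have htri := dist_triangle a (f n) (f (n + 1))
        have heq : D * (1 - τ⁻¹ ^ (n + 1)) =
            D * (1 - τ⁻¹ ^ n) + (1 / (ε * φ a)) * τ⁻¹ ^ n := by
          rw [hD]
          have hne1 : ε * φ a ≠ 0 := by positivity
          have hne2 : τ ≠ 0 := hτ0.ne'
          have hne3 : τ - 1 ≠ 0 := hτ1.ne'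
          field_simp
          have h1 : τ * (1 / τ) = 1 := by field_simp
          linear_combination (-(1 / τ) ^ n) * h1
        rw [heq]
        linarith
      refine ⟨hgrow, hdist1, ?_⟩
      -- new step bound for n+1
      have hφn1_pos : 0 < φ (f (n + 1)) := lt_of_lt_of_le (by positivity) hgrow
      have hphi1 : φ a ≤ φ (f (n + 1)) := by nlinarith [pow_pos hτ0 (n+1), one_le_pow₀ hτ.le (n := n+1)]
      have hdn1 : dist a (f (n + 1)) ≤ D := by nlinarith [pow_pos hτinv_pos (n+1)]
      have hcond1 : dist a (f (n + 1)) ≤ D ∧ φ a ≤ φ (f (n + 1)) := ⟨hdn1, hphi1⟩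
      have hfs1 : f (n + 2) = F (f (n + 1)) hcond1.1 hcond1.2 := by
        show step^[n+2] a = _
        rw [Function.iterate_succ_apply']
        show step (f (n+1)) = _
        rw [hstep]
        simp only [dif_pos hcond1]
      rw [hfs1, dist_comm]
      calc dist (F (f (n+1)) hcond1.1 hcond1.2) (f (n+1)) ≤ 1 / (ε * φ (f (n+1))) :=
            hF1 (f (n+1)) hcond1.1 hcond1.2
        _ ≤ (1 / (ε * φ a)) * τ⁻¹ ^ (n + 1) := by
            have heq : (1 / (ε * φ a)) * τ⁻¹ ^ (n + 1) = 1 / (ε * (τ ^ (n + 1) * φ a)) := by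
              rw [inv_pow]
              field_simp
            rw [heq]
            apply one_div_le_one_div_of_le (by positivity)
            have := hgrow
            nlinarith
  -- Cauchy sequence
  have hcauchy : CauchySeq f :=
    cauchySeq_of_le_geometric τ⁻¹ (1 / (ε * φ a)) hτinv_lt (fun n => (key n).2.2)
  obtain ⟨p, hp⟩ := cauchySeq_tendsto_of_complete hcauchy
  obtain ⟨C, hC⟩ := hφ_locbdd p
  have hev : ∀ᶠ n in atTop, φ (f n) ≤ C := hp.eventually hC
  have htend : Tendsto (fun n => τ ^ n * φ a) atTop atTop :=
    (tendsto_pow_atTop_atTop_of_one_lt hτ).atTop_mul_const ha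
  have hbig : ∀ᶠ n in atTop, C < τ ^ n * φ a := htend.eventually_gt_atTop C
  obtain ⟨n, h1, h2⟩ := (hev.and hbig).exists
  have := (key n).1
  linarith
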